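/- Spectral gap for the Kawasaki dynamics in finite volume: There exists a constant C_K(d) < ∞ such that for every ρ ∈ [0,1], every integer ℓ ≥ 1 and every function f : {0,1}^{B_ℓ} → ℝ, one has ⟨(f − ⟨f⟩_{ℓ,ρ})²⟩_{ℓ,ρ} ≤ C_K ℓ² Σ_{e ∈ 𝔹_ℓ} ⟨(f(η^e) − f(η))²⟩_{ℓ,ρ}. -/

import Mathlib

open Finset

noncomputable section

/-- The box `B_ℓ = {−ℓ,…,ℓ}^d` in `ℤ^d`. -/
def Box (d ℓ : ℕ) : Finset (Fin d → ℤ) :=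
  Finset.Icc (fun _ => -(ℓ : ℤ)) (fun _ => (ℓ : ℤ))

/-- A site of the box `B_ℓ`. -/
abbrev Site (d ℓ : ℕ) := {x : Fin d → ℤ // x ∈ Box d ℓ}

/-- A particle configuration `η ∈ {0,1}^{B_ℓ}`. -/
abbrev Config (d ℓ : ℕ) := Site d ℓ → Bool

/-- Two sites are neighbours when their Euclidean distance is `1`. -/
abbrev SiteAdj {d ℓ : ℕ} (y z : Site d ℓ) : Prop :=
  (∑ i, ((y : Fin d → ℤ) i - (z : Fin d → ℤ) i) ^ 2) = 1

/-- Number of particles of a configuration. -/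
def numParticles {d ℓ : ℕ} (η : Config d ℓ) : ℕ :=
  (Finset.univ.filter fun z => η z = true).card

open scoped Classical in
/-- The set of configurations with exactly `⌊ρ |B_ℓ|⌋` particles. -/
def kawasakiSlice (d ℓ : ℕ) (ρ : ℝ) : Finset (Config d ℓ) :=
  Finset.univ.filter fun η => (numParticles η : ℤ) = ⌊ρ * ((Box d ℓ).card : ℝ)⌋

/-- Expectation with respect to the uniform probability measure `⟨·⟩_{ℓ,ρ}` on the set of
configurations with exactly `⌊ρ |B_ℓ|⌋` particles. -/
def kawasakiExp (d ℓ : ℕ) (ρ : ℝ) (g : Config d ℓ → ℝ) : ℝ :=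
  (∑ η ∈ kawasakiSlice d ℓ ρ, g η) / ((kawasakiSlice d ℓ ρ).card : ℝ)

/-- The configuration `η^e` obtained from `η` by exchanging the states of the two
endpoints of the edge `e = {y,z}`. -/
def exch {d ℓ : ℕ} (y z : Site d ℓ) (η : Config d ℓ) : Config d ℓ :=
  η ∘ Equiv.swap y z

namespace KSG

variable {d ℓ : ℕ}

/-- number of sites -/
abbrev nn (d ℓ : ℕ) : ℕ := Fintype.card (Site d ℓ)

def sq2 (g : Config d ℓ → ℝ) : ℝ := ∑ η, (g η) ^ 2

def ip (g h : Config d ℓ → ℝ) : ℝ := ∑ η, g η * h η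

def opL (g : Config d ℓ → ℝ) : Config d ℓ → ℝ :=
  fun η => ∑ x, if η x then 0 else g (Function.update η x true)

def opR (g : Config d ℓ → ℝ) : Config d ℓ → ℝ :=
  fun η => ∑ x, if η x then g (Function.update η x false) else 0

lemma sq2_nonneg (g : Config d ℓ → ℝ) : 0 ≤ sq2 g :=
  Finset.sum_nonneg fun _ _ => sq_nonneg _

lemma np_le (η : Config d ℓ) : numParticles η ≤ nn d ℓ := by
  classical
  exact (Finset.card_filter_le _ _).trans (le_of_eq (Finset.card_univ))

lemma sum_ind_true (η : Config d ℓ) :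
    (∑ x, if η x then (1 : ℝ) else 0) = (numParticles η : ℝ) := by
  classical
  rw [Finset.sum_ite, Finset.sum_const, Finset.sum_const]
  simp [numParticles]

lemma sum_ind_false (η : Config d ℓ) :
    (∑ x, if η x then (0:ℝ) else 1) = (nn d ℓ : ℝ) - (numParticles η : ℝ) := by
  classical
  have h : ∀ x : Site d ℓ, (if η x then (0:ℝ) else 1) = 1 - (if η x then (1:ℝ) else 0) := by
    intro x; by_cases h : η x <;> simp [h]
  rw [Finset.sum_congr rfl fun x _ => h x, Finset.sum_sub_distrib, sum_ind_true]
  simp [nn, Finset.card_univ]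

/-- summing over configurations is invariant under flipping one site -/
lemma sum_flip (x : Site d ℓ) (F : Config d ℓ → ℝ) :
    ∑ η, F η = ∑ η, F (Function.update η x (!η x)) := by
  classical
  have hinv : Function.Involutive (fun η : Config d ℓ => Function.update η x (!η x)) := by
    intro η; funext z
    by_cases h : z = x
    · subst h; simp [Function.update_self]
    · simp [Function.update_of_ne h]
  exact (Fintype.sum_bijective _ hinv.bijective _ _ fun η => rfl).symm

lemma sum_precomp (σ : Equiv.Perm (Site d ℓ)) (F : Config d ℓ → ℝ) :
    ∑ η, F (η ∘ ⇑σ) = ∑ η, F η := by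
  classical
  have hbij : Function.Bijective (fun η : Config d ℓ => η ∘ ⇑σ) := by
    constructor
    · intro a b hab
      funext z
      have := congrFun hab (σ.symm z)
      simpa using this
    · intro γ
      exact ⟨γ ∘ ⇑σ.symm, by funext z; simp⟩
  exact Fintype.sum_bijective _ hbij _ _ (fun η => rfl)

lemma np_precomp (σ : Equiv.Perm (Site d ℓ)) (η : Config d ℓ) :
    numParticles (η ∘ ⇑σ) = numParticles η := by
  classical
  unfold numParticles
  apply Finset.card_bij (fun z _ => σ z)
  · intro a ha
    simp only [Finset.mem_filter, Finset.mem_univ, true_and] at ha ⊢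
    exact ha
  · intro a _ b _ hab
    exact σ.injective hab
  · intro b hb
    refine ⟨σ.symm b, ?_, by simp⟩
    simp only [Finset.mem_filter, Finset.mem_univ, true_and] at hb ⊢
    simpa using hb

lemma np_exch (x y : Site d ℓ) (η : Config d ℓ) :
    numParticles (exch x y η) = numParticles η := np_precomp _ η

lemma exch_involutive (x y : Site d ℓ) (η : Config d ℓ) : exch x y (exch x y η) = η := by
  funext z
  simp [exch, Function.comp, Equiv.swap_apply_self]

lemma exch_eq_self {x y : Site d ℓ} {η : Config d ℓ} (h : η x = η y) : exch x y η = η := by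
  funext z
  rcases eq_or_ne z x with rfl | hzx
  · simp [exch, Equiv.swap_apply_left, h]
  · rcases eq_or_ne z y with rfl | hzy
    · simp [exch, Equiv.swap_apply_right, h]
    · simp [exch, Equiv.swap_apply_of_ne_of_ne hzx hzy]

lemma exch_comm (x y : Site d ℓ) (η : Config d ℓ) : exch x y η = exch y x η := by
  funext z; simp [exch, Equiv.swap_comm]

lemma exch_as_update {x y : Site d ℓ} {η : Config d ℓ} (hx : η x = false) (hy : η y = true) :
    exch x y η = Function.update (Function.update η y false) x true := by
  have hxy : x ≠ y := by intro h; rw [h, hy] at hx; simp at hx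
  funext z
  rcases eq_or_ne z x with rfl | hzx
  · simp [exch, Equiv.swap_apply_left, Function.update_self, hy]
  · rcases eq_or_ne z y with rfl | hzy
    · simp [exch, Equiv.swap_apply_right, Function.update_of_ne (Ne.symm hxy),
        Function.update_self, hx]
    · simp [exch, Equiv.swap_apply_of_ne_of_ne hzx hzy, Function.update_of_ne hzx,
        Function.update_of_ne hzy]

lemma np_update_true {η : Config d ℓ} {x : Site d ℓ} (hx : η x = false) :
    numParticles (Function.update η x true) = numParticles η + 1 := by
  classical
  unfold numParticles
  have h : (Finset.univ.filter fun z => Function.update η x true z = true) =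
      insert x (Finset.univ.filter fun z => η z = true) := by
    ext z
    rcases eq_or_ne z x with rfl | hzx
    · simp [Function.update_self]
    · simp [Function.update_of_ne hzx, hzx]
  rw [h, Finset.card_insert_of_notMem (by simp [hx])]

end KSG

namespace KSG

variable {d ℓ : ℕ}

/-- adjointness of the raising/lowering operators -/
lemma adjLR (u h : Config d ℓ → ℝ) : ip (opR u) h = ip u (opL h) := by
  classical
  unfold ip opR opL
  have step : ∀ x : Site d ℓ,
      (∑ η : Config d ℓ, if η x then u (Function.update η x false) * h η else 0)
      = ∑ η : Config d ℓ, if η x then 0 else u η * h (Function.update η x true) := by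
    intro x
    rw [sum_flip x (fun η => if η x then u (Function.update η x false) * h η else 0)]
    apply Finset.sum_congr rfl
    intro η _
    by_cases hx : η x
    · simp [hx]
    · simp only [Bool.not_eq_true] at hx
      simp only [hx, Function.update_self, Bool.not_false, if_true, if_false]
      have h1 : Function.update (Function.update η x true) x false = η := by
        rw [Function.update_idem, ← hx, Function.update_eq_self]
      rw [h1]
      simp
  calc (∑ η, (∑ x, if η x then u (Function.update η x false) else 0) * h η)
      = ∑ η : Config d ℓ, ∑ x : Site d ℓ,
          (if η x then u (Function.update η x false) * h η else 0) := by
        apply Finset.sum_congr rfl; intro η _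
        rw [Finset.sum_mul]
        apply Finset.sum_congr rfl; intro x _
        by_cases hx : η x <;> simp [hx]
    _ = ∑ x : Site d ℓ, ∑ η : Config d ℓ,
          (if η x then u (Function.update η x false) * h η else 0) := Finset.sum_comm
    _ = ∑ x : Site d ℓ, ∑ η : Config d ℓ,
          (if η x then 0 else u η * h (Function.update η x true)) := by
        exact Finset.sum_congr rfl fun x _ => step x
    _ = ∑ η : Config d ℓ, ∑ x : Site d ℓ,
          (if η x then 0 else u η * h (Function.update η x true)) := Finset.sum_comm
    _ = ∑ η, u η * ∑ x, if η x then 0 else h (Function.update η x true) := by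
        apply Finset.sum_congr rfl; intro η _
        rw [Finset.mul_sum]
        apply Finset.sum_congr rfl; intro x _
        by_cases hx : η x <;> simp [hx]

/-- the exchange-sum operator -/
def swapSum (g : Config d ℓ → ℝ) (η : Config d ℓ) : ℝ :=
  ∑ y : Site d ℓ, ∑ x : Site d ℓ, if (η x = false ∧ η y = true) then g (exch x y η) else 0

lemma opL_update_of_true (g : Config d ℓ → ℝ) {η : Config d ℓ} {y : Site d ℓ}
    (hy : η y = true) :
    opL g (Function.update η y false) =
      g η + ∑ x, if η x = false then g (exch x y η) else 0 := by
  classical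
  unfold opL
  have key : ∀ x : Site d ℓ,
      (if Function.update η y false x then 0
        else g (Function.update (Function.update η y false) x true))
      = (if x = y then g η else 0) + (if η x = false then g (exch x y η) else 0) := by
    intro x
    rcases eq_or_ne x y with rfl | hxy
    · have h1 : Function.update (Function.update η x false) x true = η := by
        rw [Function.update_idem, ← hy, Function.update_eq_self]
      simp [h1, hy]
    · rw [Function.update_of_ne hxy]
      by_cases hx : η x
      · simp [hx, hxy]
      · simp only [Bool.not_eq_true] at hx
        have h2 : Function.update (Function.update η y false) x true = exch x y η :=
          (exch_as_update hx hy).symm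
        simp [hx, hxy, h2]
  rw [Finset.sum_congr rfl fun x _ => key x, Finset.sum_add_distrib, Finset.sum_ite_eq'
    Finset.univ y (fun _ => g η)]
  simp

lemma opR_update_of_false (g : Config d ℓ → ℝ) {η : Config d ℓ} {x : Site d ℓ}
    (hx : η x = false) :
    opR g (Function.update η x true) =
      g η + ∑ y, if η y = true then g (exch x y η) else 0 := by
  classical
  unfold opR
  have key : ∀ y : Site d ℓ,
      (if Function.update η x true y
        then g (Function.update (Function.update η x true) y false) else 0)
      = (if y = x then g η else 0) + (if η y = true then g (exch x y η) else 0) := by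
    intro y
    rcases eq_or_ne y x with rfl | hyx
    · have h1 : Function.update (Function.update η y true) y false = η := by
        rw [Function.update_idem, ← hx, Function.update_eq_self]
      simp [h1, hx]
    · rw [Function.update_of_ne hyx]
      by_cases hy : η y
      · have h2 : Function.update (Function.update η x true) y false = exch x y η := by
          rw [Function.update_comm (show x ≠ y from fun h => hyx h.symm)]
        
          exact (exch_as_update hx hy).symm
        simp [hy, hyx, h2]
      · simp only [Bool.not_eq_true] at hy
        simp [hy, hyx]
  rw [Finset.sum_congr rfl fun y _ => key y, Finset.sum_add_distrib, Finset.sum_ite_eq'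
    Finset.univ x (fun _ => g η)]
  simp

/-- `R L = N + A` -/
lemma opR_opL (g : Config d ℓ → ℝ) (η : Config d ℓ) :
    opR (opL g) η = (numParticles η : ℝ) * g η + swapSum g η := by
  classical
  unfold opR swapSum
  have key : ∀ y : Site d ℓ,
      (if η y then opL g (Function.update η y false) else 0)
      = (if η y then (1:ℝ) else 0) * g η
        + ∑ x, if (η x = false ∧ η y = true) then g (exch x y η) else 0 := by
    intro y
    by_cases hy : η y
    · rw [if_pos hy, opL_update_of_true g hy, if_pos hy, one_mul]
      congr 1
      apply Finset.sum_congr rfl; intro x _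
      by_cases hx : η x = false <;> simp [hx, hy]
    · simp only [Bool.not_eq_true] at hy
      simp [hy]
  rw [Finset.sum_congr rfl fun y _ => key y, Finset.sum_add_distrib, ← Finset.sum_mul,
    sum_ind_true]

/-- `L R = (n - N) + A` -/
lemma opL_opR (g : Config d ℓ → ℝ) (η : Config d ℓ) :
    opL (opR g) η = ((nn d ℓ : ℝ) - (numParticles η : ℝ)) * g η + swapSum g η := by
  classical
  unfold opL
  have key : ∀ x : Site d ℓ,
      (if η x then 0 else opR g (Function.update η x true))
      = (if η x then (0:ℝ) else 1) * g η
        + ∑ y, if (η x = false ∧ η y = true) then g (exch x y η) else 0 := by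
    intro x
    by_cases hx : η x
    · simp [hx]
    · simp only [Bool.not_eq_true] at hx
      rw [if_neg (by simp [hx]), opR_update_of_false g hx, if_neg (by simp [hx]), one_mul]
      congr 1
      apply Finset.sum_congr rfl; intro y _
      by_cases hy : η y = true <;> simp [hy, hx]
  rw [Finset.sum_congr rfl fun x _ => key x, Finset.sum_add_distrib, ← Finset.sum_mul,
    sum_ind_false]
  unfold swapSum
  rw [Finset.sum_comm]

/-- commutator `[L,R] = n - 2N` -/
lemma commLR (g : Config d ℓ → ℝ) (η : Config d ℓ) :
    opL (opR g) η - opR (opL g) η = ((nn d ℓ : ℝ) - 2 * (numParticles η : ℝ)) * g η := by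
  rw [opL_opR, opR_opL]; ring

end KSG

namespace KSG

variable {d ℓ : ℕ}

def levelSupp (k : ℕ) (g : Config d ℓ → ℝ) : Prop :=
  ∀ η, numParticles η ≠ k → g η = 0

lemma levelSupp_opL {k : ℕ} {g : Config d ℓ → ℝ} (hg : levelSupp (k+1) g) :
    levelSupp k (opL g) := by
  intro η hη
  unfold opL
  apply Finset.sum_eq_zero
  intro x _
  by_cases hx : η x
  · simp [hx]
  · simp only [Bool.not_eq_true] at hx
    rw [if_neg (by simp [hx])]
    apply hg
    rw [np_update_true hx]
    omega

lemma sum_weight_sq {k : ℕ} {g : Config d ℓ → ℝ} (hg : levelSupp k g) (c : ℕ → ℝ) :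
    ∑ η, c (numParticles η) * (g η)^2 = c k * sq2 g := by
  unfold sq2
  rw [Finset.mul_sum]
  apply Finset.sum_congr rfl
  intro η _
  by_cases h : numParticles η = k
  · rw [h]
  · rw [hg η h]; ring

lemma sum_weight {k : ℕ} {g : Config d ℓ → ℝ} (hg : levelSupp k g) (c : ℕ → ℝ) :
    ∑ η, c (numParticles η) * g η = c k * ∑ η, g η := by
  rw [Finset.mul_sum]
  apply Finset.sum_congr rfl
  intro η _
  by_cases h : numParticles η = k
  · rw [h]
  · rw [hg η h]; ring

lemma opR_one (η : Config d ℓ) : opR (fun _ => (1:ℝ)) η = (numParticles η : ℝ) := by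
  unfold opR; rw [← sum_ind_true η]

lemma sum_opL (g : Config d ℓ → ℝ) :
    ∑ η, opL g η = ∑ η, (numParticles η : ℝ) * g η := by
  have h := adjLR (fun _ => (1:ℝ)) g
  unfold ip at h
  simp only [one_mul] at h
  rw [← h]
  apply Finset.sum_congr rfl
  intro η _
  rw [opR_one]

lemma np_zero_iff (η : Config d ℓ) : numParticles η = 0 ↔ η = fun _ => false := by
  constructor
  · intro h
    funext z
    by_contra hz
    simp only [Bool.not_eq_false] at hz
    have : z ∈ Finset.univ.filter fun w => η w = true := by simp [hz]
    rw [Finset.card_eq_zero.mp h] at this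
    exact absurd this (Finset.notMem_empty z)
  · intro h
    subst h
    simp [numParticles]

/-- Key spectral estimate: for mean-zero functions supported on level `k`,
`‖L g‖² ≤ (k-1)(n-k) ‖g‖²`. -/
lemma stepA (k : ℕ) : ∀ g : Config d ℓ → ℝ, levelSupp k g → (∑ η, g η) = 0 →
    sq2 (opL g) ≤ ((k:ℝ) - 1) * ((nn d ℓ : ℝ) - (k:ℝ)) * sq2 g := by
  induction k with
  | zero =>
    intro g hg hs
    have hgz : ∀ η, g η = 0 := by
      intro η
      by_cases h : numParticles η = 0
      · have hη : η = fun _ => false := (np_zero_iff η).mp h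
        have : ∑ η', g η' = g η := by
          apply Finset.sum_eq_single η
          · intro ζ _ hζ
            apply hg
            intro hc
            exact hζ (by rw [(np_zero_iff ζ).mp hc, hη])
          · intro h'; exact absurd (Finset.mem_univ η) h'
        rw [this] at hs; exact hs
      · exact hg η h
    have h1 : sq2 (opL g) = 0 := by
      unfold sq2
      apply Finset.sum_eq_zero
      intro η _
      have : opL g η = 0 := by
        unfold opL
        apply Finset.sum_eq_zero
        intro x _
        rw [hgz]; simp
      rw [this]; ring
    have h2 : sq2 g = 0 := by
      unfold sq2; apply Finset.sum_eq_zero; intro η _; rw [hgz]; ring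
    rw [h1, h2]; simp
  | succ k ih =>
    intro g hg hs
    by_cases hkn : nn d ℓ ≤ k
    · -- level k+1 > n : g ≡ 0
      have hgz : ∀ η, g η = 0 := by
        intro η
        apply hg
        have := np_le η
        omega
      have h1 : sq2 (opL g) = 0 := by
        unfold sq2
        apply Finset.sum_eq_zero
        intro η _
        have : opL g η = 0 := by
          unfold opL
          apply Finset.sum_eq_zero
          intro x _
          rw [hgz]; simp
        rw [this]; ring
      have h2 : sq2 g = 0 := by
        unfold sq2; apply Finset.sum_eq_zero; intro η _; rw [hgz]; ring
      rw [h1, h2]; simp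
    · push_neg at hkn
      set n : ℝ := (nn d ℓ : ℝ) with hn
      have hcoef : (0:ℝ) ≤ (k:ℝ) * (n - (k:ℝ) - 1) := by
        apply mul_nonneg (Nat.cast_nonneg _)
        have : (k:ℝ) + 1 ≤ n := by
          rw [hn]; exact_mod_cast hkn
        linarith
      set h := opL g with hh
      have hlev : levelSupp k h := levelSupp_opL hg
      have hsum : ∑ η, h η = 0 := by
        rw [hh, sum_opL, sum_weight hg (fun m => (m:ℝ)), hs, mul_zero]
      -- t = ‖Lg‖², and t = ⟨RLg, g⟩
      have hid : ip (opR h) g = sq2 h := by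
        rw [adjLR, ← hh]
        unfold ip sq2
        apply Finset.sum_congr rfl; intro η _; ring
      -- Cauchy-Schwarz
      have hcs : (ip (opR h) g)^2 ≤ sq2 (opR h) * sq2 g := by
        unfold ip sq2
        exact Finset.sum_mul_sq_le_sq_mul_sq Finset.univ _ _
      -- ‖R h‖² = ‖L h‖² + (n - 2k) ‖h‖²
      have hRh : sq2 (opR h) = sq2 (opL h) + (n - 2*(k:ℝ)) * sq2 h := by
        have e1 : ip (opR h) (opR h) = ip h (opL (opR h)) := adjLR h (opR h)
        have e2 : ip h (opL (opR h)) = ip h (opR (opL h)) +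
            ∑ η, (n - 2*(numParticles η : ℝ)) * (h η)^2 := by
          unfold ip
          rw [← Finset.sum_add_distrib]
          apply Finset.sum_congr rfl
          intro η _
          have hc := commLR h η
          rw [hn]
          linear_combination h η * hc
        have e3 : ip h (opR (opL h)) = sq2 (opL h) := by
          rw [show ip h (opR (opL h)) = ip (opR (opL h)) h from by
            unfold ip; apply Finset.sum_congr rfl; intro η _; ring]
          rw [adjLR]
          unfold ip sq2
          apply Finset.sum_congr rfl; intro η _; ring
        have e4 : ∑ η, (n - 2*(numParticles η : ℝ)) * (h η)^2 = (n - 2*(k:ℝ)) * sq2 h := by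
          exact sum_weight_sq hlev (fun m => n - 2*(m:ℝ))
        have e5 : ip (opR h) (opR h) = sq2 (opR h) := by
          unfold ip sq2; apply Finset.sum_congr rfl; intro η _; ring
        rw [← e5, e1, e2, e3, e4]
      have hih := ih h hlev hsum
      have hRh2 : sq2 (opR h) ≤ (k:ℝ) * (n - (k:ℝ) - 1) * sq2 h := by
        rw [hRh]
        have : ((k:ℝ) - 1) * (n - (k:ℝ)) + (n - 2*(k:ℝ)) = (k:ℝ) * (n - (k:ℝ) - 1) := by ring
        nlinarith [hih]
      -- conclude
      have ht : (sq2 h)^2 ≤ ((k:ℝ) * (n - (k:ℝ) - 1) * sq2 h) * sq2 g := by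
        calc (sq2 h)^2 = (ip (opR h) g)^2 := by rw [hid]
          _ ≤ sq2 (opR h) * sq2 g := hcs
          _ ≤ ((k:ℝ) * (n - (k:ℝ) - 1) * sq2 h) * sq2 g := by
              apply mul_le_mul_of_nonneg_right hRh2 (sq2_nonneg g)
      have target : sq2 h ≤ ((k:ℝ)+1-1) * (n - ((k:ℝ)+1)) * sq2 g := by
        rcases eq_or_lt_of_le (sq2_nonneg h) with h0 | h0
        · rw [← h0]
          have : ((k:ℝ)+1-1) * (n - ((k:ℝ)+1)) = (k:ℝ) * (n - (k:ℝ) - 1) := by ring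
          rw [this]
          exact mul_nonneg hcoef (sq2_nonneg g)
        · have : sq2 h * sq2 h ≤ ((k:ℝ) * (n - (k:ℝ) - 1) * sq2 g) * sq2 h := by
            nlinarith [ht]
          have h2 := le_of_mul_le_mul_right (by nlinarith [this] :
            sq2 h * sq2 h ≤ ((k:ℝ) * (n - (k:ℝ) - 1) * sq2 g) * sq2 h) h0
          calc sq2 h ≤ (k:ℝ) * (n - (k:ℝ) - 1) * sq2 g := h2
            _ = ((k:ℝ)+1-1) * (n - ((k:ℝ)+1)) * sq2 g := by ring
      have : ((k+1:ℕ):ℝ) = (k:ℝ)+1 := by push_cast; ring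
      rw [this]
      exact target

end KSG

namespace KSG

variable {d ℓ : ℕ}

def Qswap (g : Config d ℓ → ℝ) (x y : Site d ℓ) : ℝ :=
  ∑ η, (g (exch x y η) - g η)^2

lemma Qswap_nonneg (g : Config d ℓ → ℝ) (x y : Site d ℓ) : 0 ≤ Qswap g x y :=
  Finset.sum_nonneg fun _ _ => sq_nonneg _

lemma sum_exch (x y : Site d ℓ) (F : Config d ℓ → ℝ) :
    ∑ η, F (exch x y η) = ∑ η, F η := sum_precomp (Equiv.swap x y) F

lemma Qswap_expand (g : Config d ℓ → ℝ) (x y : Site d ℓ) :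
    Qswap g x y = 2 * sq2 g - 2 * ∑ η, g (exch x y η) * g η := by
  unfold Qswap
  have h1 : ∑ η, (g (exch x y η) - g η)^2
      = ∑ η, ((g (exch x y η))^2 + (g η)^2 - 2 * (g (exch x y η) * g η)) := by
    apply Finset.sum_congr rfl; intro η _; ring
  rw [h1, Finset.sum_sub_distrib, Finset.sum_add_distrib]
  rw [sum_exch x y (fun η => (g η)^2)]
  unfold sq2
  rw [← Finset.mul_sum]
  ring

lemma exch_pointwise_split (g : Config d ℓ → ℝ) (η : Config d ℓ) (x y : Site d ℓ) :
    g (exch x y η) = (if η x = η y then g η else 0)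
      + (if η x = false ∧ η y = true then g (exch x y η) else 0)
      + (if η x = true ∧ η y = false then g (exch x y η) else 0) := by
  rcases Bool.eq_false_or_eq_true (η x) with hx | hx <;>
    rcases Bool.eq_false_or_eq_true (η y) with hy | hy
  · rw [exch_eq_self (show η x = η y by rw [hx, hy])]; simp [hx, hy]
  · simp [hx, hy]
  · simp [hx, hy]
  · rw [exch_eq_self (show η x = η y by rw [hx, hy])]; simp [hx, hy]

lemma sum_exch_pair (g : Config d ℓ → ℝ) (η : Config d ℓ) :
    ∑ x : Site d ℓ, ∑ y : Site d ℓ, g (exch x y η)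
      = ((numParticles η : ℝ)^2 + ((nn d ℓ : ℝ) - (numParticles η : ℝ))^2) * g η
        + 2 * swapSum g η := by
  classical
  calc ∑ x : Site d ℓ, ∑ y : Site d ℓ, g (exch x y η)
      = (∑ x : Site d ℓ, ∑ y : Site d ℓ, if η x = η y then g η else 0)
        + (∑ x : Site d ℓ, ∑ y : Site d ℓ,
            if η x = false ∧ η y = true then g (exch x y η) else 0)
        + (∑ x : Site d ℓ, ∑ y : Site d ℓ,
            if η x = true ∧ η y = false then g (exch x y η) else 0) := by
        rw [← Finset.sum_add_distrib, ← Finset.sum_add_distrib]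
        apply Finset.sum_congr rfl; intro x _
        rw [← Finset.sum_add_distrib, ← Finset.sum_add_distrib]
        exact Finset.sum_congr rfl fun y _ => exch_pointwise_split g η x y
    _ = ((numParticles η : ℝ)^2 + ((nn d ℓ : ℝ) - (numParticles η : ℝ))^2) * g η
          + swapSum g η + swapSum g η := by
        congr 1
        · congr 1
          · -- diagonal count
            have hpt : ∀ x y : Site d ℓ, (if η x = η y then g η else 0)
                = ((if η x then (1:ℝ) else 0) * (if η y then (1:ℝ) else 0)
                  + (if η x then (0:ℝ) else 1) * (if η y then (0:ℝ) else 1)) * g η := by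
              intro x y
              rcases Bool.eq_false_or_eq_true (η x) with hx | hx <;>
                rcases Bool.eq_false_or_eq_true (η y) with hy | hy <;> simp [hx, hy]
            rw [Finset.sum_congr rfl fun x _ => Finset.sum_congr rfl fun y _ => hpt x y]
            have hinner : ∀ x : Site d ℓ, (∑ y : Site d ℓ,
                ((if η x then (1:ℝ) else 0) * (if η y then (1:ℝ) else 0)
                  + (if η x then (0:ℝ) else 1) * (if η y then (0:ℝ) else 1)) * g η)
                = ((if η x then (1:ℝ) else 0) * (numParticles η : ℝ)
                  + (if η x then (0:ℝ) else 1)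
                    * ((nn d ℓ : ℝ) - (numParticles η : ℝ))) * g η := by
              intro x
              rw [← Finset.sum_mul]
              congr 1
              rw [Finset.sum_add_distrib, ← Finset.mul_sum, ← Finset.mul_sum,
                sum_ind_true, sum_ind_false]
            rw [Finset.sum_congr rfl fun x _ => hinner x, ← Finset.sum_mul]
            congr 1
            rw [Finset.sum_add_distrib, ← Finset.sum_mul, ← Finset.sum_mul,
              sum_ind_true, sum_ind_false]
            ring
          · unfold swapSum
            exact Finset.sum_comm
        · unfold swapSum
          apply Finset.sum_congr rfl; intro x _
          apply Finset.sum_congr rfl; intro y _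
          by_cases hx : η x = true <;> by_cases hy : η y = true <;>
            simp [hx, hy, exch_comm y x η]
    _ = ((numParticles η : ℝ)^2 + ((nn d ℓ : ℝ) - (numParticles η : ℝ))^2) * g η
          + 2 * swapSum g η := by ring

lemma ip_swapSum {k : ℕ} {g : Config d ℓ → ℝ} (hg : levelSupp k g) :
    ∑ η, g η * swapSum g η = sq2 (opL g) - (k:ℝ) * sq2 g := by
  have h1 : ∀ η, g η * swapSum g η
      = g η * opR (opL g) η - (numParticles η : ℝ) * (g η)^2 := by
    intro η
    have hc := opR_opL g η
    linear_combination (-(g η)) * hc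
  rw [Finset.sum_congr rfl fun η _ => h1 η, Finset.sum_sub_distrib]
  have h2 : ∑ η, g η * opR (opL g) η = sq2 (opL g) := by
    rw [show (∑ η, g η * opR (opL g) η) = ip (opR (opL g)) g from by
      unfold ip; apply Finset.sum_congr rfl; intro η _; ring]
    rw [adjLR]
    unfold ip sq2
    apply Finset.sum_congr rfl; intro η _; ring
  rw [h2, sum_weight_sq hg (fun m => (m:ℝ))]

set_option maxHeartbeats 1000000 in
/-- Mean-field (Bernoulli–Laplace) Poincaré inequality. -/
lemma meanfield {k : ℕ} {g : Config d ℓ → ℝ} (hg : levelSupp k g) (hs : (∑ η, g η) = 0) :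
    4 * (nn d ℓ : ℝ) * sq2 g ≤ ∑ x : Site d ℓ, ∑ y : Site d ℓ, Qswap g x y := by
  classical
  have hcross : ∑ x : Site d ℓ, ∑ y : Site d ℓ, (∑ η, g (exch x y η) * g η)
      = (((k:ℝ)^2 + ((nn d ℓ : ℝ) - (k:ℝ))^2) * sq2 g
          + 2 * (sq2 (opL g) - (k:ℝ) * sq2 g)) := by
    rw [Finset.sum_congr rfl fun x (_ : x ∈ Finset.univ) =>
      (Finset.sum_comm : ∑ y : Site d ℓ, ∑ η, g (exch x y η) * g η
        = ∑ η, ∑ y : Site d ℓ, g (exch x y η) * g η), Finset.sum_comm]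
    have hη : ∀ η, (∑ x : Site d ℓ, ∑ y : Site d ℓ, g (exch x y η) * g η)
        = ((numParticles η : ℝ)^2 + ((nn d ℓ : ℝ) - (numParticles η : ℝ))^2) * (g η)^2
          + 2 * (g η * swapSum g η) := by
      intro η
      have : (∑ x : Site d ℓ, ∑ y : Site d ℓ, g (exch x y η) * g η)
          = (∑ x : Site d ℓ, ∑ y : Site d ℓ, g (exch x y η)) * g η := by
        rw [Finset.sum_mul]
        apply Finset.sum_congr rfl; intro x _
        rw [Finset.sum_mul]
      rw [this, sum_exch_pair g η]
      ring
    rw [Finset.sum_congr rfl fun η _ => hη η, Finset.sum_add_distrib]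
    rw [sum_weight_sq hg (fun m => ((m:ℝ)^2 + ((nn d ℓ : ℝ) - (m:ℝ))^2)),
      ← Finset.mul_sum, ip_swapSum hg]
  have hQ : ∑ x : Site d ℓ, ∑ y : Site d ℓ, Qswap g x y
      = 2 * (nn d ℓ : ℝ)^2 * sq2 g
        - 2 * (((k:ℝ)^2 + ((nn d ℓ : ℝ) - (k:ℝ))^2) * sq2 g
          + 2 * (sq2 (opL g) - (k:ℝ) * sq2 g)) := by
    have e1 : ∀ x : Site d ℓ, ∑ y : Site d ℓ, Qswap g x y
        = (nn d ℓ : ℝ) * (2 * sq2 g) - 2 * ∑ y : Site d ℓ, ∑ η, g (exch x y η) * g η := by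
      intro x
      rw [Finset.sum_congr rfl fun y _ => Qswap_expand g x y, Finset.sum_sub_distrib,
        Finset.sum_const, Finset.card_univ, nsmul_eq_mul, ← Finset.mul_sum]
    rw [Finset.sum_congr rfl fun x _ => e1 x, Finset.sum_sub_distrib, Finset.sum_const,
      Finset.card_univ, nsmul_eq_mul, ← Finset.mul_sum, hcross]
    ring
  have hA := stepA k g hg hs
  have key : 2 * (nn d ℓ : ℝ)^2 * sq2 g
      - 2 * (((k:ℝ)^2 + ((nn d ℓ : ℝ) - (k:ℝ))^2) * sq2 g
        + 2 * (sq2 (opL g) - (k:ℝ) * sq2 g))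
      = 4 * (nn d ℓ : ℝ) * sq2 g
        + 4 * (((k:ℝ) - 1) * ((nn d ℓ : ℝ) - (k:ℝ)) * sq2 g - sq2 (opL g)) := by ring
  rw [hQ, key]
  linarith [hA]

end KSG

namespace KSG

variable {d ℓ : ℕ}

def Qperm (g : Config d ℓ → ℝ) (σ : Equiv.Perm (Site d ℓ)) : ℝ :=
  ∑ η, (g (η ∘ ⇑σ) - g η)^2

lemma Qperm_nonneg (g : Config d ℓ → ℝ) (σ : Equiv.Perm (Site d ℓ)) : 0 ≤ Qperm g σ :=
  Finset.sum_nonneg fun _ _ => sq_nonneg _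

lemma Qperm_one (g : Config d ℓ → ℝ) : Qperm g 1 = 0 := by
  unfold Qperm
  apply Finset.sum_eq_zero
  intro η _
  simp

lemma Qswap_eq_Qperm (g : Config d ℓ → ℝ) (x y : Site d ℓ) :
    Qswap g x y = Qperm g (Equiv.swap x y) := rfl

lemma wcs (a b L : ℝ) (hL : 0 < L) : (a + b)^2 ≤ (1 + L) * a^2 + (1 + 1/L) * b^2 := by
  have key : ((a + b)^2) * L ≤ ((1 + L) * a^2 + (1 + 1/L) * b^2) * L := by
    have h1 : (1 + 1/L) * b^2 * L = (L + 1) * b^2 := by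
      field_simp
    have h2 : ((1 + L) * a^2 + (1 + 1/L) * b^2) * L
        = (1 + L) * a^2 * L + (L + 1) * b^2 := by
      rw [add_mul, h1]
    rw [h2]
    nlinarith [sq_nonneg (L*a - b)]
  exact le_of_mul_le_mul_right key hL

/-- telescoping + Cauchy-Schwarz: comparison along a product of permutations -/
lemma Qperm_prod (g : Config d ℓ → ℝ) (l : List (Equiv.Perm (Site d ℓ))) :
    Qperm g l.prod ≤ (l.length : ℝ) * (l.map (Qperm g)).sum := by
  induction l with
  | nil => simp [Qperm_one]
  | cons τ l' ih =>
    by_cases hl : l' = []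
    · subst hl
      simp only [List.prod_cons, List.prod_nil, mul_one, List.length_cons, List.length_nil,
        List.map_cons, List.map_nil, List.sum_cons, List.sum_nil, add_zero]
      push_cast
      nlinarith [Qperm_nonneg g τ]
    · set L : ℝ := (l'.length : ℝ) with hLdef
      have hL : 0 < L := by
        rw [hLdef]
        exact_mod_cast Nat.pos_of_ne_zero (fun h => hl (List.length_eq_zero_iff.mp h))
      set P := l'.prod with hP
      have hAB : ∀ η : Config d ℓ,
          g (η ∘ ⇑(τ * P)) - g η
            = ((g (η ∘ ⇑τ) - g η) + (g ((η ∘ ⇑τ) ∘ ⇑P) - g (η ∘ ⇑τ))) := by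
        intro η
        have : η ∘ ⇑(τ * P) = (η ∘ ⇑τ) ∘ ⇑P := by
          funext z; simp [Equiv.Perm.mul_apply, Function.comp]
        rw [this]; ring
      have hsum : Qperm g (τ * P)
          ≤ (1 + L) * Qperm g τ + (1 + 1/L) * Qperm g P := by
        unfold Qperm
        calc ∑ η, (g (η ∘ ⇑(τ * P)) - g η)^2
            = ∑ η, ((g (η ∘ ⇑τ) - g η) + (g ((η ∘ ⇑τ) ∘ ⇑P) - g (η ∘ ⇑τ)))^2 := by
              exact Finset.sum_congr rfl fun η _ => by rw [hAB η]
          _ ≤ ∑ η, ((1 + L) * (g (η ∘ ⇑τ) - g η)^2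
                + (1 + 1/L) * (g ((η ∘ ⇑τ) ∘ ⇑P) - g (η ∘ ⇑τ))^2) := by
              apply Finset.sum_le_sum
              intro η _
              exact wcs _ _ L hL
          _ = (1 + L) * (∑ η, (g (η ∘ ⇑τ) - g η)^2)
                + (1 + 1/L) * ∑ η, (g ((η ∘ ⇑τ) ∘ ⇑P) - g (η ∘ ⇑τ))^2 := by
              rw [Finset.sum_add_distrib, ← Finset.mul_sum, ← Finset.mul_sum]
          _ = (1 + L) * Qperm g τ + (1 + 1/L) * ∑ η, (g (η ∘ ⇑P) - g η)^2 := by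
              congr 1
              congr 1
              exact sum_precomp τ (fun ζ => (g (ζ ∘ ⇑P) - g ζ)^2)
      have hIH : Qperm g P ≤ L * (l'.map (Qperm g)).sum := ih
      have hQτ : 0 ≤ Qperm g τ := Qperm_nonneg g τ
      have hS' : 0 ≤ (l'.map (Qperm g)).sum := by
        apply List.sum_nonneg
        intro x hx
        obtain ⟨σ, _, rfl⟩ := List.mem_map.mp hx
        exact Qperm_nonneg g σ
      calc Qperm g (τ :: l').prod = Qperm g (τ * P) := by rw [List.prod_cons]
        _ ≤ (1 + L) * Qperm g τ + (1 + 1/L) * Qperm g P := hsum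
        _ ≤ (1 + L) * Qperm g τ + (1 + 1/L) * (L * (l'.map (Qperm g)).sum) := by
            apply add_le_add le_rfl
            apply mul_le_mul_of_nonneg_left hIH
            positivity
        _ = (1 + L) * (Qperm g τ + (l'.map (Qperm g)).sum) := by
            field_simp
            ring
        _ = ((τ :: l').length : ℝ) * ((τ :: l').map (Qperm g)).sum := by
            simp only [List.length_cons, List.map_cons, List.sum_cons]
            push_cast
            ring

/-- the palindromic list of nearest-neighbour transpositions along a path -/
def pal {α : Type*} [DecidableEq α] (p : ℕ → α) : ℕ → List (Equiv.Perm α)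
  | 0 => []
  | 1 => [Equiv.swap (p 0) (p 1)]
  | (B+2) => Equiv.swap (p 0) (p 1) ::
      (pal (fun j => p (j+1)) (B+1) ++ [Equiv.swap (p 0) (p 1)])

lemma pal_length {α : Type*} [DecidableEq α] :
    ∀ (B : ℕ) (p : ℕ → α), (pal p B).length ≤ 2 * B := by
  intro B
  induction B using Nat.twoStepInduction with
  | zero => intro p; simp [pal]
  | one => intro p; simp [pal]
  | more B _ ih2 =>
    intro p
    show (pal p (B+2)).length ≤ 2 * (B+2)
    simp only [pal, List.length_cons, List.length_append, List.length_singleton,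
      List.length_nil]
    have := ih2 (fun j => p (j+1))
    omega

lemma pal_prod_const {α : Type*} [DecidableEq α] :
    ∀ (B : ℕ) (p : ℕ → α), (∀ j, p j = p 0) → (pal p B).prod = 1 := by
  intro B
  induction B using Nat.twoStepInduction with
  | zero => intro p _; simp [pal]
  | one =>
    intro p hp
    simp only [pal, List.prod_singleton]
    rw [hp 1, Equiv.swap_self]
    rfl
  | more B _ ih2 =>
    intro p hp
    show (pal p (B+2)).prod = 1
    simp only [pal, List.prod_cons, List.prod_append, List.prod_singleton]
    rw [ih2 (fun j => p (j+1)) (fun j => (hp (j+1)).trans (hp 1).symm), hp 1,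
      Equiv.swap_self]
    have h1 : (Equiv.refl α : Equiv.Perm α) = 1 := rfl
    rw [h1]
    simp

lemma pal_prod {α : Type*} [DecidableEq α] :
    ∀ (B : ℕ), 1 ≤ B → ∀ (p : ℕ → α), (∀ j, j < B → p j ≠ p B) →
      (pal p B).prod = Equiv.swap (p 0) (p B) := by
  intro B
  induction B using Nat.twoStepInduction with
  | zero => intro h; omega
  | one => intro _ p _; simp [pal]
  | more B _ ih2 =>
    intro _ p hfresh
    show (pal p (B+2)).prod = Equiv.swap (p 0) (p (B+2))
    simp only [pal, List.prod_cons, List.prod_append, List.prod_singleton]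
    have hmid : (pal (fun j => p (j+1)) (B+1)).prod = Equiv.swap (p 1) (p (B+2)) := by
      rw [ih2 (by omega) (fun j => p (j+1)) (fun j hj => hfresh (j+1) (by omega))]
    rw [hmid]
    by_cases h01 : p 0 = p 1
    · rw [h01, Equiv.swap_self]
      have h1 : (Equiv.refl α : Equiv.Perm α) = 1 := rfl
      rw [h1]
      simp
    · have hB0 : p (B+2) ≠ p 0 := (hfresh 0 (by omega)).symm
      have hB1 : p (B+2) ≠ p 1 := (hfresh 1 (by omega)).symm
      have key := Equiv.swap_apply_apply (Equiv.swap (p 0) (p 1)) (p 1) (p (B+2))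
      rw [Equiv.swap_apply_right, Equiv.swap_apply_of_ne_of_ne hB0 hB1] at key
      rw [Equiv.swap_inv] at key
      rw [← mul_assoc]
      exact key.symm

lemma pal_map_sum_le {α : Type*} [DecidableEq α] (Q : Equiv.Perm α → ℝ)
    (hQ : ∀ σ, 0 ≤ Q σ) :
    ∀ (B : ℕ) (p : ℕ → α), ((pal p B).map Q).sum
      ≤ 2 * ∑ j ∈ Finset.range B, Q (Equiv.swap (p j) (p (j+1))) := by
  intro B
  induction B using Nat.twoStepInduction with
  | zero => intro p; simp [pal]
  | one =>
    intro p
    simp only [pal, List.map_singleton, List.sum_singleton, Finset.range_one,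
      Finset.sum_singleton]
    nlinarith [hQ (Equiv.swap (p 0) (p 1))]
  | more B _ ih2 =>
    intro p
    show ((pal p (B+2)).map Q).sum ≤ 2 * ∑ j ∈ Finset.range (B+2), Q (Equiv.swap (p j) (p (j+1)))
    simp only [pal, List.map_cons, List.map_append, List.map_singleton, List.sum_cons,
      List.sum_append, List.sum_singleton, List.map_nil, List.sum_nil]
    have hmid := ih2 (fun j => p (j+1))
    have hpeel : ∑ j ∈ Finset.range (B+2), Q (Equiv.swap (p j) (p (j+1)))
        = (∑ j ∈ Finset.range (B+1), Q (Equiv.swap (p (j+1)) (p (j+1+1))))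
          + Q (Equiv.swap (p 0) (p 1)) := by
      exact Finset.sum_range_succ' _ (B+1)
    rw [hpeel]
    linarith [hmid]

end KSG

namespace KSG

variable {d ℓ : ℕ}

/-- length of the move in coordinate `i` -/
def del (d : ℕ) (x y : Fin d → ℤ) (i : ℕ) : ℕ :=
  if h : i < d then (y ⟨i, h⟩ - x ⟨i, h⟩).natAbs else 0

/-- starting time of the move in coordinate `j` -/
def sig (d : ℕ) (x y : Fin d → ℤ) (j : ℕ) : ℕ := ∑ i ∈ Finset.range j, del d x y i

/-- total length of path from `x` to `y` -/
def tT (d : ℕ) (x y : Fin d → ℤ) : ℕ := sig d x y d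

lemma del_coe (x y : Fin d → ℤ) (m : Fin d) : del d x y (m : ℕ) = (y m - x m).natAbs := by
  unfold del
  rw [dif_pos m.isLt]

lemma sig_succ (x y : Fin d → ℤ) (j : ℕ) :
    sig d x y (j+1) = sig d x y j + del d x y j := Finset.sum_range_succ _ j

lemma sig_mono (x y : Fin d → ℤ) {j j' : ℕ} (h : j ≤ j') : sig d x y j ≤ sig d x y j' :=
  Finset.sum_le_sum_of_subset (Finset.range_subset_range.mpr h)

def clamp (d : ℕ) (x y : Fin d → ℤ) (j : ℕ) (m : Fin d) : ℤ :=
  max 0 (min ((del d x y m : ℕ) : ℤ) ((j:ℤ) - (sig d x y m : ℤ)))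

def posZ (d : ℕ) (x y : Fin d → ℤ) (j : ℕ) : Fin d → ℤ :=
  fun m => x m + (y m - x m).sign * clamp d x y j m

/-- basic clamp bounds -/
lemma clamp_nonneg (x y : Fin d → ℤ) (j : ℕ) (m : Fin d) : 0 ≤ clamp d x y j m :=
  le_max_left _ _

lemma clamp_le (x y : Fin d → ℤ) (j : ℕ) (m : Fin d) :
    clamp d x y j m ≤ ((del d x y m : ℕ) : ℤ) := by
  unfold clamp
  omega

lemma posZ_zero (x y : Fin d → ℤ) : posZ d x y 0 = x := by
  funext m
  unfold posZ
  have hcl : clamp d x y 0 m = 0 := by unfold clamp; omega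
  rw [hcl]; ring

lemma posZ_done (x y : Fin d → ℤ) {j : ℕ} {m : Fin d} (h : sig d x y ((m:ℕ)+1) ≤ j) :
    posZ d x y j m = y m := by
  unfold posZ clamp
  have hs := sig_succ x y (m : ℕ)
  have hd := del_coe x y m
  have hcl : max 0 (min ((del d x y m : ℕ) : ℤ) ((j:ℤ) - (sig d x y m : ℤ)))
      = ((del d x y m : ℕ) : ℤ) := by omega
  rw [hcl, hd]
  have := Int.sign_mul_natAbs (y m - x m)
  omega

lemma posZ_before (x y : Fin d → ℤ) {j : ℕ} {m : Fin d} (h : j ≤ sig d x y m) :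
    posZ d x y j m = x m := by
  unfold posZ clamp
  have hcl : max 0 (min ((del d x y m : ℕ) : ℤ) ((j:ℤ) - (sig d x y m : ℤ))) = 0 := by omega
  rw [hcl]
  ring

lemma posZ_ge_T (x y : Fin d → ℤ) {j : ℕ} (h : tT d x y ≤ j) : posZ d x y j = y := by
  funext m
  exact posZ_done x y (le_trans (sig_mono x y (by exact m.isLt)) h)

lemma posZ_between (x y : Fin d → ℤ) (j : ℕ) (m : Fin d) :
    (x m ≤ y m → x m ≤ posZ d x y j m ∧ posZ d x y j m ≤ y m) ∧
    (y m ≤ x m → y m ≤ posZ d x y j m ∧ posZ d x y j m ≤ x m) := by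
  unfold posZ
  have h1 := clamp_nonneg x y j m
  have h2 := clamp_le x y j m
  rw [del_coe] at h2
  have hs := Int.sign_mul_natAbs (y m - x m)
  rcases lt_trichotomy (y m - x m) 0 with hneg | hzero | hpos
  · rw [Int.sign_eq_neg_one_of_neg hneg] at hs ⊢
    constructor <;> intro <;> omega
  · rw [hzero]
    simp only [Int.sign_zero, zero_mul, add_zero]
    constructor <;> intro <;> omega
  · rw [Int.sign_eq_one_of_pos hpos] at hs ⊢
    constructor <;> intro <;> omega

/-- the coordinate moving at time `j < T` -/
lemma exists_interval (x y : Fin d → ℤ) {j : ℕ} (hj : j < tT d x y) :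
    ∃ i : Fin d, sig d x y (i:ℕ) ≤ j ∧ j < sig d x y ((i:ℕ)+1) := by
  have key : ∀ K : ℕ, K ≤ d → j < sig d x y K →
      ∃ i : ℕ, i < K ∧ sig d x y i ≤ j ∧ j < sig d x y (i+1) := by
    intro K
    induction K with
    | zero => intro _ h; simp [sig] at h
    | succ K ih =>
      intro hKd h
      by_cases hK : sig d x y K ≤ j
      · exact ⟨K, by omega, hK, h⟩
      · obtain ⟨i, h1, h2, h3⟩ := ih (by omega) (by omega)
        exact ⟨i, by omega, h2, h3⟩
  obtain ⟨i, h1, h2, h3⟩ := key d le_rfl hj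
  exact ⟨⟨i, h1⟩, h2, h3⟩

lemma del_pos_of_interval (x y : Fin d → ℤ) {j : ℕ} {i : Fin d}
    (h1 : sig d x y (i:ℕ) ≤ j) (h2 : j < sig d x y ((i:ℕ)+1)) : 0 < del d x y (i:ℕ) := by
  have := sig_succ x y (i:ℕ)
  omega

lemma clamp_interval (x y : Fin d → ℤ) {j : ℕ} {i : Fin d}
    (h1 : sig d x y (i:ℕ) ≤ j) (h2 : j < sig d x y ((i:ℕ)+1)) :
    clamp d x y j i = (j:ℤ) - (sig d x y (i:ℕ) : ℤ) := by
  unfold clamp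
  have := sig_succ x y (i:ℕ)
  omega

/-- at an interior time the moving coordinate has not reached its target -/
lemma posZ_ne_target (x y : Fin d → ℤ) {j : ℕ} {i : Fin d}
    (h1 : sig d x y (i:ℕ) ≤ j) (h2 : j < sig d x y ((i:ℕ)+1)) :
    posZ d x y j i ≠ y i := by
  unfold posZ
  rw [clamp_interval x y h1 h2]
  have hs := Int.sign_mul_natAbs (y i - x i)
  have hd := del_coe x y i
  have hss := sig_succ x y (i:ℕ)
  have hdpos := del_pos_of_interval x y h1 h2
  rcases lt_trichotomy (y i - x i) 0 with hneg | hzero | hpos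
  · rw [Int.sign_eq_neg_one_of_neg hneg]
    omega
  · exfalso; rw [hzero] at hs; omega
  · rw [Int.sign_eq_one_of_pos hpos]
    omega

/-- coordinates outside the active interval do not move in step `j → j+1` -/
lemma posZ_step_other (x y : Fin d → ℤ) {j : ℕ} {i : Fin d}
    (h1 : sig d x y (i:ℕ) ≤ j) (h2 : j < sig d x y ((i:ℕ)+1)) {m : Fin d} (hm : m ≠ i) :
    posZ d x y (j+1) m = posZ d x y j m := by
  rcases lt_or_gt_of_ne (fun h => hm (Fin.ext h) : (m:ℕ) ≠ (i:ℕ)) with hlt | hgt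
  · -- m < i : both are y m
    have hmi : sig d x y ((m:ℕ)+1) ≤ sig d x y (i:ℕ) := sig_mono x y (by omega)
    rw [posZ_done x y (by omega), posZ_done x y (by omega)]
  · -- m > i : both are x m
    have hmi : sig d x y ((i:ℕ)+1) ≤ sig d x y (m:ℕ) := sig_mono x y (by omega)
    rw [posZ_before x y (by omega), posZ_before x y (by omega)]

/-- the moving coordinate moves by exactly one -/
lemma posZ_step_active (x y : Fin d → ℤ) {j : ℕ} {i : Fin d}
    (h1 : sig d x y (i:ℕ) ≤ j) (h2 : j < sig d x y ((i:ℕ)+1)) :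
    (posZ d x y (j+1) i - posZ d x y j i)^2 = 1 := by
  unfold posZ
  rw [clamp_interval x y h1 h2]
  have hcl : clamp d x y (j+1) i = (j:ℤ) + 1 - (sig d x y (i:ℕ) : ℤ) := by
    unfold clamp
    have := sig_succ x y (i:ℕ)
    omega
  rw [hcl]
  have hdpos := del_pos_of_interval x y h1 h2
  have hd := del_coe x y i
  have hs := Int.sign_mul_natAbs (y i - x i)
  rcases lt_trichotomy (y i - x i) 0 with hneg | hzero | hpos
  · rw [Int.sign_eq_neg_one_of_neg hneg]; ring
  · exfalso; rw [hzero] at hs; omega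
  · rw [Int.sign_eq_one_of_pos hpos]; ring

/-- time is recoverable from the active coordinate value -/
lemma posZ_time_formula (x y : Fin d → ℤ) {j : ℕ} {i : Fin d}
    (h1 : sig d x y (i:ℕ) ≤ j) (h2 : j < sig d x y ((i:ℕ)+1)) :
    (j : ℤ) = (sig d x y (i:ℕ) : ℤ) + ((posZ d x y j i - x i).natAbs : ℤ) := by
  unfold posZ
  rw [clamp_interval x y h1 h2]
  have hdpos := del_pos_of_interval x y h1 h2
  have hd := del_coe x y i
  have hs := Int.sign_mul_natAbs (y i - x i)
  have hss := sig_succ x y (i:ℕ)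
  rcases lt_trichotomy (y i - x i) 0 with hneg | hzero | hpos
  · rw [Int.sign_eq_neg_one_of_neg hneg]
    have : x i + -1 * ((j:ℤ) - (sig d x y (i:ℕ):ℤ)) - x i = -((j:ℤ) - (sig d x y (i:ℕ):ℤ)) := by
      ring
    rw [this]
    omega
  · exfalso; rw [hzero] at hs; omega
  · rw [Int.sign_eq_one_of_pos hpos]
    have : x i + 1 * ((j:ℤ) - (sig d x y (i:ℕ):ℤ)) - x i = (j:ℤ) - (sig d x y (i:ℕ):ℤ) := by
      ring
    rw [this]
    omega

lemma posZ_stationary (x y : Fin d → ℤ) (hxy : tT d x y = 0) (j : ℕ) :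
    posZ d x y j = x := by
  funext m
  unfold posZ
  have h2 := clamp_le x y j m
  have h1 := clamp_nonneg x y j m
  have hdel : del d x y (m:ℕ) = 0 := by
    have ha : sig d x y ((m:ℕ)+1) ≤ sig d x y d := sig_mono x y m.isLt
    have hb := sig_succ x y (m:ℕ)
    unfold tT at hxy
    omega
  rw [hdel] at h2
  have hcl : clamp d x y j m = 0 := by omega
  rw [hcl]; ring

lemma tT_eq_zero_iff (x y : Fin d → ℤ) : tT d x y = 0 ↔ ∀ m : Fin d, x m = y m := by
  constructor
  · intro h m
    have h1 : del d x y (m:ℕ) = 0 := by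
      have h2 : sig d x y ((m:ℕ)+1) ≤ sig d x y d := sig_mono x y m.isLt
      have h3 := sig_succ x y (m:ℕ)
      unfold tT at h
      omega
    rw [del_coe] at h1
    omega
  · intro h
    unfold tT sig
    apply Finset.sum_eq_zero
    intro i hi
    unfold del
    rw [dif_pos (Finset.mem_range.mp hi)]
    rw [h ⟨i, Finset.mem_range.mp hi⟩]
    omega

end KSG

namespace KSG

variable {d ℓ : ℕ}

lemma mem_box_iff (x : Fin d → ℤ) :
    x ∈ Box d ℓ ↔ ∀ m : Fin d, -(ℓ:ℤ) ≤ x m ∧ x m ≤ (ℓ:ℤ) := by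
  unfold Box
  rw [Finset.mem_Icc]
  constructor
  · rintro ⟨h1, h2⟩ m
    exact ⟨h1 m, h2 m⟩
  · intro h
    exact ⟨fun m => (h m).1, fun m => (h m).2⟩

lemma site_coord_mem (w : Site d ℓ) (k : Fin d) :
    w.1 k ∈ Finset.Icc (-(ℓ:ℤ)) (ℓ:ℤ) := by
  rw [Finset.mem_Icc]
  exact (mem_box_iff w.1).mp w.2 k

def posS (x y : Site d ℓ) (j : ℕ) : Site d ℓ :=
  ⟨posZ d x.1 y.1 j, by
    rw [mem_box_iff]
    intro m
    have hx := (mem_box_iff x.1).mp x.2 m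
    have hy := (mem_box_iff y.1).mp y.2 m
    have hb := posZ_between x.1 y.1 j m
    rcases le_total (x.1 m) (y.1 m) with h | h
    · have := hb.1 h
      omega
    · have := hb.2 h
      omega⟩

abbrev pB (d ℓ : ℕ) : ℕ := 2*d*ℓ

lemma del_le (x y : Site d ℓ) (i : ℕ) : del d x.1 y.1 i ≤ 2*ℓ := by
  unfold del
  split
  · next h =>
    have hx := (mem_box_iff x.1).mp x.2 ⟨i, h⟩
    have hy := (mem_box_iff y.1).mp y.2 ⟨i, h⟩
    omega
  · omega

lemma tT_le (x y : Site d ℓ) : tT d x.1 y.1 ≤ pB d ℓ := by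
  unfold tT sig
  calc ∑ i ∈ Finset.range d, del d x.1 y.1 i ≤ ∑ _i ∈ Finset.range d, 2*ℓ :=
        Finset.sum_le_sum fun i _ => del_le x y i
    _ = d * (2*ℓ) := by rw [Finset.sum_const, Finset.card_range, smul_eq_mul]
    _ = pB d ℓ := by unfold pB; ring

def padN (x y : Site d ℓ) : ℕ := pB d ℓ - tT d x.1 y.1

def posD (x y : Site d ℓ) (j : ℕ) : Site d ℓ := posS x y (j - padN x y)

lemma posD_zero (x y : Site d ℓ) : posD x y 0 = x := by
  unfold posD posS
  apply Subtype.ext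
  simp only [Nat.zero_sub]
  exact posZ_zero x.1 y.1

lemma posD_last (x y : Site d ℓ) : posD x y (pB d ℓ) = y := by
  unfold posD posS
  apply Subtype.ext
  have h : pB d ℓ - padN x y = tT d x.1 y.1 := by
    have := tT_le x y
    unfold padN
    omega
  rw [h]
  exact posZ_ge_T x.1 y.1 le_rfl

lemma posD_fresh (x y : Site d ℓ) (hxy : x ≠ y) {j : ℕ} (hj : j < pB d ℓ) :
    posD x y j ≠ y := by
  have hT : tT d x.1 y.1 ≠ 0 := by
    intro h
    apply hxy
    apply Subtype.ext
    funext m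
    exact (tT_eq_zero_iff x.1 y.1).mp h m
  set r := j - padN x y with hr
  have hrT : r < tT d x.1 y.1 := by
    unfold padN at hr
    have := tT_le x y
    omega
  obtain ⟨i, h1, h2⟩ := exists_interval x.1 y.1 hrT
  intro hcon
  exact posZ_ne_target x.1 y.1 h1 h2 (congrFun (congrArg Subtype.val hcon) i)

lemma posD_const (x : Site d ℓ) (j : ℕ) : posD x x j = x := by
  unfold posD posS
  apply Subtype.ext
  exact posZ_stationary x.1 x.1 ((tT_eq_zero_iff x.1 x.1).mpr fun _ => rfl) _

/-- full description of a non-trivial step of the delayed path -/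
lemma step_data (x y : Site d ℓ) {j : ℕ} (hne : posD x y j ≠ posD x y (j+1)) :
    ∃ i : Fin d,
      ((posD x y (j+1)).1 i - (posD x y j).1 i)^2 = 1 ∧
      (∀ m : Fin d, m ≠ i → (posD x y (j+1)).1 m = (posD x y j).1 m) ∧
      (∀ m : Fin d, (i:ℕ) < (m:ℕ) → (posD x y j).1 m = x.1 m) ∧
      (∀ m : Fin d, (m:ℕ) < (i:ℕ) → (posD x y j).1 m = y.1 m) ∧
      j = padN x y + sig d x.1 y.1 (i:ℕ) + ((posD x y j).1 i - x.1 i).natAbs := by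
  have hr1 : padN x y ≤ j := by
    by_contra h
    apply hne
    unfold posD
    have h1 : j - padN x y = 0 := by omega
    have h2 : (j+1) - padN x y = 0 := by omega
    rw [h1, h2]
  set r := j - padN x y with hrdef
  have hstep : (j+1) - padN x y = r + 1 := by omega
  have hrT : r < tT d x.1 y.1 := by
    by_contra h
    push_neg at h
    apply hne
    apply Subtype.ext
    show posZ d x.1 y.1 (j - padN x y) = posZ d x.1 y.1 ((j+1) - padN x y)
    rw [posZ_ge_T x.1 y.1 (show tT d x.1 y.1 ≤ j - padN x y by omega),
      posZ_ge_T x.1 y.1 (show tT d x.1 y.1 ≤ (j+1) - padN x y by omega)]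
  obtain ⟨i, h1, h2⟩ := exists_interval x.1 y.1 hrT
  have hD : ∀ s : ℕ, (posD x y s).1 = posZ d x.1 y.1 (s - padN x y) := fun s => rfl
  refine ⟨i, ?_, ?_, ?_, ?_, ?_⟩
  · rw [hD, hD, hstep, ← hrdef]
    exact posZ_step_active x.1 y.1 h1 h2
  · intro m hm
    rw [hD, hD, hstep, ← hrdef]
    exact posZ_step_other x.1 y.1 h1 h2 hm
  · intro m hm
    rw [hD, ← hrdef]
    apply posZ_before x.1 y.1
    have : sig d x.1 y.1 ((i:ℕ)+1) ≤ sig d x.1 y.1 (m:ℕ) := sig_mono x.1 y.1 (by omega)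
    omega
  · intro m hm
    rw [hD, ← hrdef]
    apply posZ_done x.1 y.1
    have : sig d x.1 y.1 ((m:ℕ)+1) ≤ sig d x.1 y.1 (i:ℕ) := sig_mono x.1 y.1 (by omega)
    omega
  · have hf := posZ_time_formula x.1 y.1 h1 h2
    rw [hD, ← hrdef]
    omega

/-- a nontrivial step is between adjacent sites -/
lemma step_adj (x y : Site d ℓ) {j : ℕ} (hne : posD x y j ≠ posD x y (j+1)) :
    SiteAdj (posD x y j) (posD x y (j+1)) := by
  obtain ⟨i, h1, h2, _, _, _⟩ := step_data x y hne
  unfold SiteAdj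
  rw [Finset.sum_eq_single i]
  · rw [show ((posD x y j).1 i - (posD x y (j+1)).1 i)^2
        = ((posD x y (j+1)).1 i - (posD x y j).1 i)^2 from by ring]
    exact h1
  · intro m _ hm
    rw [h2 m hm]
    ring
  · intro h
    exact absurd (Finset.mem_univ i) h

end KSG

namespace KSG

variable {d ℓ : ℕ}

def pathDom (d ℓ : ℕ) : Finset ((Site d ℓ × Site d ℓ) × ℕ) :=
  (Finset.univ ×ˢ Finset.univ) ×ˢ Finset.range (pB d ℓ)

def φmap (a : (Site d ℓ × Site d ℓ) × ℕ) : Site d ℓ × Site d ℓ :=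
  (posD a.1.1 a.1.2 a.2, posD a.1.1 a.1.2 (a.2+1))

lemma fiber_card (uv : Site d ℓ × Site d ℓ) (hne : uv.1 ≠ uv.2) :
    (((pathDom d ℓ)).filter fun a => φmap a = uv).card ≤ (2*ℓ+1)^(d+1) := by
  classical
  have hex : ∃ i : Fin d, uv.1.1 i ≠ uv.2.1 i := by
    by_contra h
    push_neg at h
    exact hne (Subtype.ext (funext h))
  obtain ⟨i₀, hi₀⟩ := hex
  set ψ : (Site d ℓ × Site d ℓ) × ℕ → (Fin (d+1) → ↥(Finset.Icc (-(ℓ:ℤ)) (ℓ:ℤ))) :=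
    fun a m => if h : (m:ℕ) ≤ (i₀:ℕ) then
        ⟨a.1.1.1 ⟨(m:ℕ), by have := i₀.isLt; omega⟩, site_coord_mem _ _⟩
      else
        ⟨a.1.2.1 ⟨(m:ℕ)-1, by have := m.isLt; have := i₀.isLt; omega⟩,
          site_coord_mem _ _⟩ with hψdef
  -- facts about elements of the fiber
  have hfact : ∀ a ∈ (pathDom d ℓ).filter fun a => φmap a = uv,
      (∀ m : Fin d, (i₀:ℕ) < (m:ℕ) → a.1.1.1 m = uv.1.1 m) ∧
      (∀ m : Fin d, (m:ℕ) < (i₀:ℕ) → a.1.2.1 m = uv.1.1 m) ∧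
      a.2 = padN a.1.1 a.1.2 + sig d a.1.1.1 a.1.2.1 (i₀:ℕ)
        + (uv.1.1 i₀ - a.1.1.1 i₀).natAbs := by
    intro a ha
    rw [Finset.mem_filter] at ha
    obtain ⟨-, haφ⟩ := ha
    have hu : posD a.1.1 a.1.2 a.2 = uv.1 := congrArg Prod.fst haφ
    have hv : posD a.1.1 a.1.2 (a.2+1) = uv.2 := congrArg Prod.snd haφ
    have hne' : posD a.1.1 a.1.2 a.2 ≠ posD a.1.1 a.1.2 (a.2+1) := by
      rw [hu, hv]; exact hne
    obtain ⟨i, hsq, hoth, hgt, hlt, hj⟩ := step_data a.1.1 a.1.2 hne'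
    have hii : i = i₀ := by
      by_contra hcon
      apply hi₀
      rw [← hu, ← hv]
      exact (hoth i₀ (fun hh => hcon hh.symm)).symm
    subst hii
    refine ⟨?_, ?_, ?_⟩
    · intro m hm
      rw [← hu]
      exact (hgt m hm).symm
    · intro m hm
      rw [← hu]
      exact (hlt m hm).symm
    · rw [hu] at hj
      exact hj
  have hinj : Set.InjOn ψ ((pathDom d ℓ).filter fun a => φmap a = uv) := by
    intro a ha a' ha' hψ
    obtain ⟨hgt, hlt, hj⟩ := hfact a ha
    obtain ⟨hgt', hlt', hj'⟩ := hfact a' ha'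
    have hx : a.1.1 = a'.1.1 := by
      apply Subtype.ext
      funext m
      rcases le_or_gt (m:ℕ) (i₀:ℕ) with hm | hm
      · have := congrFun hψ ⟨(m:ℕ), by have := m.isLt; omega⟩
        simp only [hψdef, dif_pos (show ((⟨(m:ℕ), _⟩ : Fin (d+1)):ℕ) ≤ (i₀:ℕ) from hm)] at this
        have hval := congrArg Subtype.val this
        simpa using hval
      · rw [hgt m hm, hgt' m hm]
    have hy : a.1.2 = a'.1.2 := by
      apply Subtype.ext
      funext m
      rcases lt_or_ge (m:ℕ) (i₀:ℕ) with hm | hm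
      · rw [hlt m hm, hlt' m hm]
      · have hval := congrArg Subtype.val (congrFun hψ ⟨(m:ℕ)+1, by have := m.isLt; omega⟩)
        simp only [hψdef] at hval
        have hc : ¬((m:ℕ)+1 ≤ (i₀:ℕ)) := by omega
        simp only [dif_neg hc] at hval
        simpa using hval
    have hjj : a.2 = a'.2 := by
      rw [hj, hj', hx, hy]
    exact Prod.ext (Prod.ext hx hy) hjj
  calc (((pathDom d ℓ)).filter fun a => φmap a = uv).card
      ≤ (Finset.univ : Finset (Fin (d+1) → ↥(Finset.Icc (-(ℓ:ℤ)) (ℓ:ℤ)))).card :=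
        Finset.card_le_card_of_injOn ψ (fun a _ => Finset.mem_univ _) hinj
    _ = (2*ℓ+1)^(d+1) := by
        rw [Finset.card_univ, Fintype.card_fun, Fintype.card_coe, Int.card_Icc,
          Fintype.card_fin]
        congr 1
        omega

end KSG

namespace KSG

variable {d ℓ : ℕ}

lemma Qswap_self (g : Config d ℓ → ℝ) (u : Site d ℓ) : Qperm g (Equiv.swap u u) = 0 := by
  rw [Equiv.swap_self]
  rw [show (Equiv.refl (Site d ℓ) : Equiv.Perm (Site d ℓ)) = 1 from rfl]
  exact Qperm_one g

lemma congestion (g : Config d ℓ → ℝ) :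
    ∑ x : Site d ℓ, ∑ y : Site d ℓ, ∑ j ∈ Finset.range (pB d ℓ),
        Qperm g (Equiv.swap (posD x y j) (posD x y (j+1)))
      ≤ ((2*ℓ+1)^(d+1) : ℝ) * ∑ u : Site d ℓ, ∑ v : Site d ℓ,
          (if SiteAdj u v then Qperm g (Equiv.swap u v) else 0) := by
  classical
  set F : Site d ℓ × Site d ℓ → ℝ := fun uv => Qperm g (Equiv.swap uv.1 uv.2) with hF
  have hLHS : ∑ x : Site d ℓ, ∑ y : Site d ℓ, ∑ j ∈ Finset.range (pB d ℓ),
      Qperm g (Equiv.swap (posD x y j) (posD x y (j+1)))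
      = ∑ a ∈ pathDom d ℓ, F (φmap a) := by
    unfold pathDom
    rw [Finset.sum_product, Finset.sum_product]
    rfl
  rw [hLHS, ← Finset.sum_fiberwise (pathDom d ℓ) φmap (fun a => F (φmap a))]
  have hfib : ∀ uv : Site d ℓ × Site d ℓ,
      ∑ a ∈ (pathDom d ℓ).filter (fun a => φmap a = uv), F (φmap a)
      = ((pathDom d ℓ).filter (fun a => φmap a = uv)).card • F uv := by
    intro uv
    rw [Finset.sum_congr rfl (fun a ha => by
      rw [(Finset.mem_filter.mp ha).2] : ∀ a ∈ (pathDom d ℓ).filter (fun a => φmap a = uv),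
        F (φmap a) = F uv), Finset.sum_const]
  rw [Finset.sum_congr rfl fun uv _ => hfib uv]
  have hbound : ∀ uv : Site d ℓ × Site d ℓ,
      ((pathDom d ℓ).filter (fun a => φmap a = uv)).card • F uv
      ≤ ((2*ℓ+1)^(d+1) : ℝ) * (if SiteAdj uv.1 uv.2 then F uv else 0) := by
    intro uv
    by_cases huv : uv.1 = uv.2
    · have hF0 : F uv = 0 := by
        rw [hF]
        simp only
        rw [huv, Qswap_self]
      rw [hF0, smul_zero]
      by_cases hadj : SiteAdj uv.1 uv.2 <;> simp [hadj, hF0]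
    · rcases Finset.eq_empty_or_nonempty
        ((pathDom d ℓ).filter (fun a => φmap a = uv)) with hemp | hne
      · rw [hemp]
        simp only [Finset.card_empty, zero_smul]
        by_cases hadj : SiteAdj uv.1 uv.2
        · rw [if_pos hadj]
          have : 0 ≤ F uv := Qperm_nonneg g _
          positivity
        · rw [if_neg hadj, mul_zero]
      · obtain ⟨a, ha⟩ := hne
        have haφ := (Finset.mem_filter.mp ha).2
        have hu : posD a.1.1 a.1.2 a.2 = uv.1 := congrArg Prod.fst haφ
        have hv : posD a.1.1 a.1.2 (a.2+1) = uv.2 := congrArg Prod.snd haφ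
        have hadj : SiteAdj uv.1 uv.2 := by
          rw [← hu, ← hv]
          apply step_adj
          rw [hu, hv]
          exact huv
        rw [if_pos hadj, nsmul_eq_mul]
        apply mul_le_mul_of_nonneg_right _ (Qperm_nonneg g _)
        exact_mod_cast fiber_card uv huv
  calc ∑ uv : Site d ℓ × Site d ℓ,
        ((pathDom d ℓ).filter (fun a => φmap a = uv)).card • F uv
      ≤ ∑ uv : Site d ℓ × Site d ℓ,
          ((2*ℓ+1)^(d+1) : ℝ) * (if SiteAdj uv.1 uv.2 then F uv else 0) :=
        Finset.sum_le_sum fun uv _ => hbound uv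
    _ = ((2*ℓ+1)^(d+1) : ℝ) * ∑ u : Site d ℓ, ∑ v : Site d ℓ,
          (if SiteAdj u v then Qperm g (Equiv.swap u v) else 0) := by
        rw [← Finset.mul_sum]
        congr 1
        rw [Fintype.sum_prod_type]

/-- comparison of a single long-range exchange with nearest-neighbour ones -/
lemma per_pair (g : Config d ℓ → ℝ) (hB : 1 ≤ pB d ℓ) (x y : Site d ℓ) :
    Qperm g (Equiv.swap x y) ≤ (2*(pB d ℓ) : ℝ) *
      (2 * ∑ j ∈ Finset.range (pB d ℓ), Qperm g (Equiv.swap (posD x y j) (posD x y (j+1)))) := by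
  classical
  set p : ℕ → Site d ℓ := fun j => posD x y j with hp
  have hsum_nonneg : 0 ≤ ∑ j ∈ Finset.range (pB d ℓ),
      Qperm g (Equiv.swap (posD x y j) (posD x y (j+1))) :=
    Finset.sum_nonneg fun j _ => Qperm_nonneg g _
  have hprod : (pal p (pB d ℓ)).prod = Equiv.swap x y := by
    rcases eq_or_ne x y with rfl | hxy
    · rw [pal_prod_const (pB d ℓ) p (fun j => by rw [hp]; simp only; rw [posD_const, posD_const])]
      rw [Equiv.swap_self]
      rfl
    · rw [pal_prod (pB d ℓ) hB p (fun j hj => by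
        rw [hp]
        simp only
        rw [posD_last]
        exact posD_fresh x y hxy hj)]
      rw [hp]
      simp only
      rw [posD_zero, posD_last]
  have h1 : Qperm g (Equiv.swap x y)
      ≤ ((pal p (pB d ℓ)).length : ℝ) * ((pal p (pB d ℓ)).map (Qperm g)).sum := by
    rw [← hprod]
    exact Qperm_prod g _
  have h2 : ((pal p (pB d ℓ)).map (Qperm g)).sum
      ≤ 2 * ∑ j ∈ Finset.range (pB d ℓ), Qperm g (Equiv.swap (p j) (p (j+1))) :=
    pal_map_sum_le (Qperm g) (Qperm_nonneg g) (pB d ℓ) p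
  have h3 : ((pal p (pB d ℓ)).length : ℝ) ≤ 2 * (pB d ℓ) := by
    have := pal_length (pB d ℓ) p
    exact_mod_cast this
  have h4 : 0 ≤ ((pal p (pB d ℓ)).map (Qperm g)).sum := by
    apply List.sum_nonneg
    intro r hr
    obtain ⟨σ, _, rfl⟩ := List.mem_map.mp hr
    exact Qperm_nonneg g σ
  calc Qperm g (Equiv.swap x y)
      ≤ ((pal p (pB d ℓ)).length : ℝ) * ((pal p (pB d ℓ)).map (Qperm g)).sum := h1
    _ ≤ (2*(pB d ℓ) : ℝ) * ((pal p (pB d ℓ)).map (Qperm g)).sum :=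
        mul_le_mul_of_nonneg_right h3 h4
    _ ≤ (2*(pB d ℓ) : ℝ) *
        (2 * ∑ j ∈ Finset.range (pB d ℓ), Qperm g (Equiv.swap (p j) (p (j+1)))) := by
        apply mul_le_mul_of_nonneg_left h2
        positivity

end KSG

namespace KSG

variable {d ℓ : ℕ}

lemma nn_eq : nn d ℓ = (2*ℓ+1)^d := by
  have h1 : nn d ℓ = (Box d ℓ).card := Fintype.card_coe _
  rw [h1]
  unfold Box
  rw [Pi.card_Icc]
  have h2 : ∀ _i : Fin d, (Finset.Icc (-(ℓ:ℤ)) (ℓ:ℤ)).card = 2*ℓ+1 := by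
    intro i
    rw [Int.card_Icc]
    omega
  rw [Finset.prod_congr rfl fun i _ => h2 i, Finset.prod_const, Finset.card_univ,
    Fintype.card_fin]

lemma exists_config {k : ℕ} (hk : k ≤ nn d ℓ) : ∃ η : Config d ℓ, numParticles η = k := by
  classical
  obtain ⟨t, -, ht⟩ := Finset.exists_subset_card_eq (s := (Finset.univ : Finset (Site d ℓ))) (n := k)
    (by rw [Finset.card_univ]; exact hk)
  refine ⟨fun z => decide (z ∈ t), ?_⟩
  unfold numParticles
  rw [← ht]
  congr 1
  ext z
  simp

end KSG


set_option maxHeartbeats 1600000 in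
/-- **Spectral gap for the Kawasaki dynamics in finite volume.**
Fix `d ≥ 2`.  There exists `C_K(d) < ∞` such that for every `ρ ∈ [0,1]`, every `ℓ ≥ 1`
and every `f : {0,1}^{B_ℓ} → ℝ`,
`⟨(f − ⟨f⟩_{ℓ,ρ})²⟩_{ℓ,ρ} ≤ C_K ℓ² Σ_{e ∈ 𝔹_ℓ} ⟨(f(η^e) − f(η))²⟩_{ℓ,ρ}`.
The sum over unordered nearest-neighbour edges `e = {y,z} ⊆ B_ℓ` is written as half the
sum over ordered pairs of adjacent sites. -/
theorem kawasaki_spectral_gap (d : ℕ) (hd : 2 ≤ d) :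
    ∃ C : ℝ, 0 < C ∧ ∀ ρ ∈ Set.Icc (0 : ℝ) 1, ∀ ℓ : ℕ, 1 ≤ ℓ →
      ∀ f : Config d ℓ → ℝ,
        kawasakiExp d ℓ ρ (fun η => (f η - kawasakiExp d ℓ ρ f) ^ 2) ≤
          C * (ℓ : ℝ) ^ 2 *
            ((1 : ℝ) / 2 * ∑ y : Site d ℓ, ∑ z : Site d ℓ,
              if SiteAdj y z then
                kawasakiExp d ℓ ρ (fun η => (f (exch y z η) - f η) ^ 2)
              else 0) := by
  classical
  refine ⟨12*(d:ℝ), by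
    have hd0 : (0:ℝ) < (d:ℝ) := by exact_mod_cast (show 0 < d by omega)
    linarith, ?_⟩
  intro ρ hρ ℓ hℓ f
  set S := kawasakiSlice d ℓ ρ with hS
  set m := kawasakiExp d ℓ ρ f with hm
  set k : ℕ := (⌊ρ * ((Box d ℓ).card : ℝ)⌋).toNat with hk
  have hρ0 : 0 ≤ ρ := hρ.1
  have hρ1 : ρ ≤ 1 := hρ.2
  have hfloor0 : 0 ≤ ⌊ρ * ((Box d ℓ).card : ℝ)⌋ :=
    Int.floor_nonneg.mpr (by positivity)
  have hmem : ∀ η : Config d ℓ, η ∈ S ↔ numParticles η = k := by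
    intro η
    rw [hS]
    unfold kawasakiSlice
    rw [Finset.mem_filter]
    constructor
    · rintro ⟨-, h⟩
      rw [hk]
      omega
    · intro h
      refine ⟨Finset.mem_univ _, ?_⟩
      rw [hk] at h
      omega
  have hkle : k ≤ KSG.nn d ℓ := by
    have h1 : ⌊ρ * ((Box d ℓ).card : ℝ)⌋ ≤ ((Box d ℓ).card : ℤ) := by
      have hle : ρ * ((Box d ℓ).card : ℝ) ≤ ((Box d ℓ).card : ℝ) := by
        nlinarith [Nat.cast_nonneg (α := ℝ) (Box d ℓ).card]
      calc ⌊ρ * ((Box d ℓ).card : ℝ)⌋ ≤ ⌊((Box d ℓ).card : ℝ)⌋ := Int.floor_le_floor hle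
        _ = ((Box d ℓ).card : ℤ) := Int.floor_natCast _
    have h2 : KSG.nn d ℓ = (Box d ℓ).card := Fintype.card_coe _
    omega
  have hSne : S.Nonempty := by
    obtain ⟨η, hη⟩ := KSG.exists_config hkle
    exact ⟨η, (hmem η).mpr hη⟩
  have hN : (0:ℝ) < (S.card : ℝ) := by
    exact_mod_cast Finset.card_pos.mpr hSne
  set g : Config d ℓ → ℝ := fun η => if numParticles η = k then f η - m else 0 with hg
  have hsupp : KSG.levelSupp k g := by
    intro η hη
    rw [hg]
    simp only
    rw [if_neg hη]
  have hsum_restrict : ∀ F : Config d ℓ → ℝ, (∀ η, η ∉ S → F η = 0) →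
      ∑ η, F η = ∑ η ∈ S, F η := by
    intro F hF
    exact (Finset.sum_subset (Finset.subset_univ S) (fun η _ hη => hF η hη)).symm
  have hsum0 : ∑ η, g η = 0 := by
    rw [hsum_restrict g (fun η hη => by
      rw [hg]; simp only; rw [if_neg (fun hc => hη ((hmem η).mpr hc))])]
    have h2 : ∑ η ∈ S, g η = ∑ η ∈ S, (f η - m) := by
      apply Finset.sum_congr rfl
      intro η hη
      rw [hg]
      simp only
      rw [if_pos ((hmem η).mp hη)]
    rw [h2, Finset.sum_sub_distrib, Finset.sum_const, nsmul_eq_mul, hm]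
    unfold kawasakiExp
    rw [← hS]
    field_simp
    ring
  have hsq2 : KSG.sq2 g = ∑ η ∈ S, (f η - m)^2 := by
    unfold KSG.sq2
    rw [hsum_restrict (fun η => (g η)^2) (fun η hη => by
      rw [hg]; simp only; rw [if_neg (fun hc => hη ((hmem η).mpr hc))]; ring)]
    apply Finset.sum_congr rfl
    intro η hη
    rw [hg]
    simp only
    rw [if_pos ((hmem η).mp hη)]
  have hQeq : ∀ u v : Site d ℓ,
      KSG.Qperm g (Equiv.swap u v) = ∑ η ∈ S, (f (exch u v η) - f η)^2 := by
    intro u v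
    unfold KSG.Qperm
    have hcomp : ∀ η : Config d ℓ, η ∘ ⇑(Equiv.swap u v) = exch u v η := fun η => rfl
    rw [Finset.sum_congr rfl fun η _ => by rw [hcomp η]]
    rw [hsum_restrict (fun η => (g (exch u v η) - g η)^2) (fun η hη => by
      show (g (exch u v η) - g η)^2 = 0
      have h1 : numParticles η ≠ k := fun hc => hη ((hmem η).mpr hc)
      have h2 : numParticles (exch u v η) ≠ k := by
        rw [KSG.np_exch]
        exact h1
      rw [hsupp η h1, hsupp _ h2]
      ring)]
    apply Finset.sum_congr rfl
    intro η hη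
    have h1 : numParticles η = k := (hmem η).mp hη
    have h2 : numParticles (exch u v η) = k := by rw [KSG.np_exch]; exact h1
    rw [hg]
    simp only
    rw [if_pos h1, if_pos h2]
    ring
  -- step A: mean-field Poincaré
  have hmf := KSG.meanfield hsupp hsum0
  -- step B: path comparison
  have hB : 1 ≤ KSG.pB d ℓ := by
    have h1 : 2*2*1 ≤ 2*d*ℓ := Nat.mul_le_mul (Nat.mul_le_mul (le_refl 2) hd) hℓ
    unfold KSG.pB
    omega
  set Sadj : ℝ := ∑ u : Site d ℓ, ∑ v : Site d ℓ,
      (if SiteAdj u v then KSG.Qperm g (Equiv.swap u v) else 0) with hSadef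
  have hSanonneg : 0 ≤ Sadj := by
    rw [hSadef]
    apply Finset.sum_nonneg
    intro u _
    apply Finset.sum_nonneg
    intro v _
    by_cases h : SiteAdj u v
    · rw [if_pos h]; exact KSG.Qperm_nonneg g _
    · rw [if_neg h]
  have hpp : ∑ x : Site d ℓ, ∑ y : Site d ℓ, KSG.Qswap g x y
      ≤ (4*(KSG.pB d ℓ) : ℝ) * ∑ x : Site d ℓ, ∑ y : Site d ℓ,
          ∑ j ∈ Finset.range (KSG.pB d ℓ),
            KSG.Qperm g (Equiv.swap (KSG.posD x y j) (KSG.posD x y (j+1))) := by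
    rw [Finset.mul_sum]
    apply Finset.sum_le_sum
    intro x _
    rw [Finset.mul_sum]
    apply Finset.sum_le_sum
    intro y _
    calc KSG.Qswap g x y = KSG.Qperm g (Equiv.swap x y) := KSG.Qswap_eq_Qperm g x y
      _ ≤ (2*(KSG.pB d ℓ) : ℝ) * (2 * ∑ j ∈ Finset.range (KSG.pB d ℓ),
            KSG.Qperm g (Equiv.swap (KSG.posD x y j) (KSG.posD x y (j+1)))) :=
          KSG.per_pair g hB x y
      _ = (4*(KSG.pB d ℓ) : ℝ) * ∑ j ∈ Finset.range (KSG.pB d ℓ),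
            KSG.Qperm g (Equiv.swap (KSG.posD x y j) (KSG.posD x y (j+1))) := by ring
  have hcong := KSG.congestion g
  have main : 4 * (KSG.nn d ℓ : ℝ) * KSG.sq2 g
      ≤ (4*(KSG.pB d ℓ) : ℝ) * (((2*ℓ+1)^(d+1) : ℕ) : ℝ) * Sadj := by
    calc 4 * (KSG.nn d ℓ : ℝ) * KSG.sq2 g
        ≤ ∑ x : Site d ℓ, ∑ y : Site d ℓ, KSG.Qswap g x y := hmf
      _ ≤ (4*(KSG.pB d ℓ) : ℝ) * ∑ x : Site d ℓ, ∑ y : Site d ℓ,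
            ∑ j ∈ Finset.range (KSG.pB d ℓ),
              KSG.Qperm g (Equiv.swap (KSG.posD x y j) (KSG.posD x y (j+1))) := hpp
      _ ≤ (4*(KSG.pB d ℓ) : ℝ) * ((((2*ℓ+1)^(d+1) : ℕ) : ℝ) * Sadj) := by
          apply mul_le_mul_of_nonneg_left _ (by positivity)
          rw [hSadef]
          exact_mod_cast hcong
      _ = (4*(KSG.pB d ℓ) : ℝ) * (((2*ℓ+1)^(d+1) : ℕ) : ℝ) * Sadj := by ring
  -- numerics
  have hℓR : (1:ℝ) ≤ (ℓ:ℝ) := by exact_mod_cast hℓ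
  have hnnpos : (0:ℝ) < (KSG.nn d ℓ : ℝ) := by
    have : 0 < KSG.nn d ℓ := by
      rw [KSG.nn_eq]
      positivity
    exact_mod_cast this
  have hfinal : KSG.sq2 g ≤ 6*(d:ℝ)*(ℓ:ℝ)^2*Sadj := by
    have hcast1 : ((KSG.pB d ℓ : ℕ) : ℝ) = 2*(d:ℝ)*(ℓ:ℝ) := by
      unfold KSG.pB
      push_cast
      ring
    have hcast2 : (((2*ℓ+1)^(d+1) : ℕ) : ℝ) = (2*(ℓ:ℝ)+1) * (KSG.nn d ℓ : ℝ) := by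
      rw [KSG.nn_eq]
      push_cast
      ring
    have h2l : (2*(ℓ:ℝ)+1) ≤ 3*(ℓ:ℝ) := by linarith
    have hd0 : (0:ℝ) ≤ (d:ℝ) := Nat.cast_nonneg d
    have hkey : (4*(KSG.pB d ℓ) : ℝ) * (((2*ℓ+1)^(d+1) : ℕ) : ℝ) * Sadj
        ≤ 4 * (KSG.nn d ℓ : ℝ) * (6*(d:ℝ)*(ℓ:ℝ)^2*Sadj) := by
      rw [hcast1, hcast2]
      have hfac : (4*(2*(d:ℝ)*(ℓ:ℝ))) * ((2*(ℓ:ℝ)+1) * (KSG.nn d ℓ : ℝ))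
          ≤ 4 * (KSG.nn d ℓ : ℝ) * (6*(d:ℝ)*(ℓ:ℝ)^2) := by
        calc (4*(2*(d:ℝ)*(ℓ:ℝ))) * ((2*(ℓ:ℝ)+1) * (KSG.nn d ℓ : ℝ))
            = (8*(d:ℝ)*(ℓ:ℝ)*(KSG.nn d ℓ : ℝ)) * (2*(ℓ:ℝ)+1) := by ring
          _ ≤ (8*(d:ℝ)*(ℓ:ℝ)*(KSG.nn d ℓ : ℝ)) * (3*(ℓ:ℝ)) := by
              apply mul_le_mul_of_nonneg_left h2l
              have h1 : (0:ℝ) < (ℓ:ℝ) := by linarith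
              positivity
          _ = 4 * (KSG.nn d ℓ : ℝ) * (6*(d:ℝ)*(ℓ:ℝ)^2) := by ring
      nlinarith [hSanonneg, hfac]
    have hA := le_trans main hkey
    have h4n : (0:ℝ) < 4 * (KSG.nn d ℓ : ℝ) := by linarith
    exact le_of_mul_le_mul_left hA h4n
  -- final rewriting
  have hLHS : kawasakiExp d ℓ ρ (fun η => (f η - m) ^ 2) = KSG.sq2 g / (S.card : ℝ) := by
    unfold kawasakiExp
    rw [← hS, hsq2]
  have hRHS : ∑ y : Site d ℓ, ∑ z : Site d ℓ,
      (if SiteAdj y z then kawasakiExp d ℓ ρ (fun η => (f (exch y z η) - f η) ^ 2) else 0)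
      = Sadj / (S.card : ℝ) := by
    rw [hSadef, Finset.sum_div]
    apply Finset.sum_congr rfl
    intro y _
    rw [Finset.sum_div]
    apply Finset.sum_congr rfl
    intro z _
    by_cases h : SiteAdj y z
    · rw [if_pos h, if_pos h]
      unfold kawasakiExp
      rw [← hS, hQeq]
    · rw [if_neg h, if_neg h, zero_div]
  rw [hLHS, hRHS]
  calc KSG.sq2 g / (S.card : ℝ) ≤ (6*(d:ℝ)*(ℓ:ℝ)^2*Sadj) / (S.card : ℝ) :=
        div_le_div_of_nonneg_right hfinal hN.le
    _ = 12*(d:ℝ) * (ℓ:ℝ)^2 * (1/2 * (Sadj / (S.card : ℝ))) := by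
        field_simp
        ring


end
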